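/- Let P = π(S^d₊ ∩ L) be a positive semidefinite lift of a polytope P ⊆ ℝⁿ, where L is an affine subspace of d×d symmetric matrices satisfying Slater's condition (L meets the interior of the psd cone), π is linear, and let X ⊆ P with a map A : X → S^d₊ ∩ L satisfying π(A(x)) = x for all x ∈ X. Then for every linear functional ℓ on ℝⁿ there exists a positive semidefinite matrix B(ℓ) such that ℓ_max − ℓ(x) = ⟨A(x), B(ℓ)⟩ for all x ∈ X, where ℓ_max = max_{x∈P} ℓ(x) and ⟨·,·⟩ is the trace inner product. -/

import Mathlib

open Matrix

namespace PsdLiftAux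

variable {d : ℕ}

lemma quad_cont (M : Matrix (Fin d) (Fin d) ℝ) :
    Continuous fun x : Fin d → ℝ => x ⬝ᵥ (M *ᵥ x) := by
  simp only [dotProduct, mulVec]
  exact continuous_finset_sum _ fun i _ =>
    (continuous_apply i).mul <| continuous_finset_sum _ fun j _ =>
      continuous_const.mul (continuous_apply j)

lemma quad_smul (M : Matrix (Fin d) (Fin d) ℝ) (a : ℝ) (x : Fin d → ℝ) :
    (a • x) ⬝ᵥ (M *ᵥ (a • x)) = a ^ 2 * (x ⬝ᵥ (M *ᵥ x)) := by
  rw [mulVec_smul, dotProduct_smul, smul_dotProduct, smul_eq_mul, smul_eq_mul]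
  ring

lemma exists_lower (M : Matrix (Fin d) (Fin d) ℝ) (hM : M.PosDef) :
    ∃ c > 0, ∀ x : Fin d → ℝ, c * ‖x‖ ^ 2 ≤ x ⬝ᵥ (M *ᵥ x) := by
  by_cases hd : ∃ x : Fin d → ℝ, x ≠ 0
  · obtain ⟨x₀, hx₀⟩ := hd
    have hsph : (Metric.sphere (0 : Fin d → ℝ) 1).Nonempty := by
      refine ⟨‖x₀‖⁻¹ • x₀, ?_⟩
      simp [norm_smul, abs_of_nonneg, inv_mul_cancel₀ (norm_ne_zero_iff.2 hx₀),
        norm_ne_zero_iff.2 hx₀]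
    obtain ⟨y, hy, hmin⟩ := (isCompact_sphere (0 : Fin d → ℝ) 1).exists_isMinOn hsph
      (quad_cont M).continuousOn
    have hy1 : ‖y‖ = 1 := by simpa using hy
    have hy0 : y ≠ 0 := by intro h; rw [h] at hy1; simp at hy1
    refine ⟨y ⬝ᵥ (M *ᵥ y), by simpa using hM.dotProduct_mulVec_pos hy0, fun x => ?_⟩
    rcases eq_or_ne x 0 with rfl | hx
    · simp
    · have hnx : (0:ℝ) < ‖x‖ := norm_pos_iff.2 hx
      have hu : (‖x‖⁻¹ • x) ∈ Metric.sphere (0 : Fin d → ℝ) 1 := by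
        simp [norm_smul, abs_of_nonneg, inv_mul_cancel₀ hnx.ne']
      have : y ⬝ᵥ (M *ᵥ y) ≤ (‖x‖⁻¹ • x) ⬝ᵥ (M *ᵥ (‖x‖⁻¹ • x)) := hmin hu
      have hq : x ⬝ᵥ (M *ᵥ x) = ‖x‖ ^ 2 * ((‖x‖⁻¹ • x) ⬝ᵥ (M *ᵥ (‖x‖⁻¹ • x))) := by
        rw [quad_smul]
        field_simp
      rw [hq]
      calc y ⬝ᵥ M *ᵥ y * ‖x‖ ^ 2 ≤ ((‖x‖⁻¹ • x) ⬝ᵥ (M *ᵥ (‖x‖⁻¹ • x))) * ‖x‖^2 := by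
            apply mul_le_mul_of_nonneg_right this (by positivity)
        _ = _ := by ring
  · refine ⟨1, one_pos, fun x => ?_⟩
    have : x = 0 := by by_contra h; exact hd ⟨x, h⟩
    simp [this]

lemma exists_upper (N : Matrix (Fin d) (Fin d) ℝ) :
    ∃ C : ℝ, ∀ x : Fin d → ℝ, x ⬝ᵥ (N *ᵥ x) ≤ C * ‖x‖ ^ 2 := by
  by_cases hd : ∃ x : Fin d → ℝ, x ≠ 0
  · obtain ⟨x₀, hx₀⟩ := hd
    have hsph : (Metric.sphere (0 : Fin d → ℝ) 1).Nonempty := by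
      refine ⟨‖x₀‖⁻¹ • x₀, ?_⟩
      simp [norm_smul, abs_of_nonneg, inv_mul_cancel₀ (norm_ne_zero_iff.2 hx₀),
        norm_ne_zero_iff.2 hx₀]
    obtain ⟨y, hy, hmax⟩ := (isCompact_sphere (0 : Fin d → ℝ) 1).exists_isMaxOn hsph
      (quad_cont N).continuousOn
    refine ⟨y ⬝ᵥ (N *ᵥ y), fun x => ?_⟩
    rcases eq_or_ne x 0 with rfl | hx
    · simp
    · have hnx : (0:ℝ) < ‖x‖ := norm_pos_iff.2 hx
      have hu : (‖x‖⁻¹ • x) ∈ Metric.sphere (0 : Fin d → ℝ) 1 := by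
        simp [norm_smul, abs_of_nonneg, inv_mul_cancel₀ hnx.ne']
      have h1 : (‖x‖⁻¹ • x) ⬝ᵥ (N *ᵥ (‖x‖⁻¹ • x)) ≤ y ⬝ᵥ (N *ᵥ y) := hmax hu
      have hq : x ⬝ᵥ (N *ᵥ x) = ‖x‖ ^ 2 * ((‖x‖⁻¹ • x) ⬝ᵥ (N *ᵥ (‖x‖⁻¹ • x))) := by
        rw [quad_smul]; field_simp
      rw [hq]
      calc ‖x‖^2 * ((‖x‖⁻¹ • x) ⬝ᵥ (N *ᵥ (‖x‖⁻¹ • x))) ≤ ‖x‖^2 * (y ⬝ᵥ (N *ᵥ y)) := by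
            apply mul_le_mul_of_nonneg_left h1 (by positivity)
        _ = _ := by ring
  · refine ⟨0, fun x => ?_⟩
    have : x = 0 := by by_contra h; exact hd ⟨x, h⟩
    simp [this]

lemma psd_smul {M : Matrix (Fin d) (Fin d) ℝ} (h : M.PosSemidef) {c : ℝ} (hc : 0 ≤ c) :
    (c • M).PosSemidef := by
  refine posSemidef_iff_dotProduct_mulVec.mpr ⟨?_, ?_⟩
  · unfold Matrix.IsHermitian
    rw [conjTranspose_smul, h.1]
    simp
  · intro x
    rw [smul_mulVec, dotProduct_smul, smul_eq_mul]
    exact mul_nonneg hc (h.dotProduct_mulVec_nonneg x)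

lemma exists_shift (M₀ N : Matrix (Fin d) (Fin d) ℝ) (hM₀ : M₀.PosDef) (hN : Nᴴ = N)
    (s₀ : ℝ) : ∃ t ≥ s₀, (t • M₀ + N).PosSemidef := by
  obtain ⟨c, hc, hlow⟩ := exists_lower M₀ hM₀
  obtain ⟨C, hup⟩ := exists_upper (-N)
  refine ⟨max s₀ (max C 0 / c), le_max_left _ _, posSemidef_iff_dotProduct_mulVec.mpr ⟨?_, ?_⟩⟩
  · unfold Matrix.IsHermitian
    rw [conjTranspose_add, conjTranspose_smul, hM₀.1, hN]
    simp
  · intro x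
    have hsx : star x = x := by simp
    rw [hsx, add_mulVec, smul_mulVec, dotProduct_add, dotProduct_smul, smul_eq_mul]
    have h1 : c * ‖x‖ ^ 2 ≤ x ⬝ᵥ (M₀ *ᵥ x) := hlow x
    have h2 : x ⬝ᵥ ((-N) *ᵥ x) ≤ C * ‖x‖ ^ 2 := hup x
    have h2' : -(x ⬝ᵥ (N *ᵥ x)) ≤ C * ‖x‖ ^ 2 := by
      simpa [neg_mulVec, dotProduct_neg] using h2
    have ht : max C 0 / c ≤ max s₀ (max C 0 / c) := le_max_right _ _
    have hC0 : (0:ℝ) ≤ max C 0 := le_max_right _ _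
    have hq0 : 0 ≤ x ⬝ᵥ (M₀ *ᵥ x) := le_trans (by positivity) h1
    have key : max C 0 * ‖x‖ ^ 2 ≤ max s₀ (max C 0 / c) * (x ⬝ᵥ (M₀ *ᵥ x)) := by
      calc max C 0 * ‖x‖ ^ 2 = (max C 0 / c) * (c * ‖x‖ ^ 2) := by
            field_simp
        _ ≤ (max C 0 / c) * (x ⬝ᵥ (M₀ *ᵥ x)) := by
            apply mul_le_mul_of_nonneg_left h1 (by positivity)
        _ ≤ _ := mul_le_mul_of_nonneg_right ht hq0
    have hCle : C * ‖x‖ ^ 2 ≤ max C 0 * ‖x‖ ^ 2 :=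
      mul_le_mul_of_nonneg_right (le_max_left _ _) (by positivity)
    linarith

end PsdLiftAux

section Main
open PsdLiftAux

/-- Factorization theorem for psd lifts: if a polytope `P = π(S⁺_d ∩ L)` (with `L` an
affine subspace of symmetric matrices meeting the interior of the psd cone) and
`A : X → S⁺_d ∩ L` is a section of `π` over `X ⊆ P`, then every linear functional `ℓ`
admits a psd matrix `B(ℓ)` with `ℓ_max - ℓ(x) = ⟨A(x), B(ℓ)⟩` for all `x ∈ X`. -/
theorem psd_lift_factorization (n d : ℕ)
    (P : Set (Fin n → ℝ))
    (hpoly : ∃ F : Set (Fin n → ℝ), F.Finite ∧ P = convexHull ℝ F)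
    (L : AffineSubspace ℝ (Matrix (Fin d) (Fin d) ℝ))
    (hLsym : ∀ M ∈ L, Mᵀ = M)
    (π : Matrix (Fin d) (Fin d) ℝ →ₗ[ℝ] (Fin n → ℝ))
    (hlift : P = π '' {M | M.PosSemidef ∧ M ∈ L})
    (hslater : ∃ M ∈ L, M.PosDef)
    (X : Set (Fin n → ℝ)) (hX : X ⊆ P)
    (A : X → Matrix (Fin d) (Fin d) ℝ)
    (hA : ∀ x : X, (A x).PosSemidef ∧ A x ∈ L ∧ π (A x) = (x : Fin n → ℝ))
    (ℓ : (Fin n → ℝ) →ₗ[ℝ] ℝ) (lmax : ℝ)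
    (hlmax : IsGreatest (ℓ '' P) lmax) :
    ∃ B : Matrix (Fin d) (Fin d) ℝ, B.PosSemidef ∧
      ∀ x : X, lmax - ℓ (x : Fin n → ℝ) = Matrix.trace ((A x)ᵀ * B) := by
  classical
  obtain ⟨M₀, hM₀L, hM₀pd⟩ := hslater
  set W := L.direction with hWdef
  have hM₀sym : M₀ᵀ = M₀ := hLsym _ hM₀L
  have hWsym : ∀ w ∈ W, wᵀ = w := by
    intro w hw
    rw [hWdef, AffineSubspace.mem_direction_iff_eq_vsub ⟨M₀, hM₀L⟩] at hw
    obtain ⟨p, hp, q, hq, rfl⟩ := hw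
    simp [vsub_eq_sub, transpose_sub, hLsym p hp, hLsym q hq]
  have hmemL : ∀ M : Matrix (Fin d) (Fin d) ℝ, M ∈ L ↔ M - M₀ ∈ W := by
    intro M
    constructor
    · intro h; exact AffineSubspace.vsub_mem_direction h hM₀L
    · intro h
      have := AffineSubspace.vadd_mem_of_mem_direction h hM₀L
      simpa [vadd_eq_add, sub_add_cancel] using this
  have hPbound : ∀ M : Matrix (Fin d) (Fin d) ℝ,
      M.PosSemidef → M ∈ L → ℓ (π M) ≤ lmax := by
    intro M h1 h2
    refine hlmax.2 ⟨π M, ?_, rfl⟩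
    rw [hlift]
    exact ⟨M, ⟨h1, h2⟩, rfl⟩
  -- homogenization subspace
  set φ : Matrix (Fin d) (Fin d) ℝ × ℝ →ₗ[ℝ] Matrix (Fin d) (Fin d) ℝ :=
    LinearMap.fst ℝ _ ℝ - (LinearMap.snd ℝ (Matrix (Fin d) (Fin d) ℝ) ℝ).smulRight M₀
      with hφdef
  set H : Submodule ℝ (Matrix (Fin d) (Fin d) ℝ × ℝ) := W.comap φ with hHdef
  have hHmem : ∀ p : Matrix (Fin d) (Fin d) ℝ × ℝ, p ∈ H ↔ p.1 - p.2 • M₀ ∈ W := by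
    intro p
    rw [hHdef, Submodule.mem_comap]
    rfl
  set F₀ : Matrix (Fin d) (Fin d) ℝ × ℝ →ₗ[ℝ] ℝ :=
    lmax • (LinearMap.snd ℝ (Matrix (Fin d) (Fin d) ℝ) ℝ)
      - (ℓ ∘ₗ π ∘ₗ LinearMap.fst ℝ (Matrix (Fin d) (Fin d) ℝ) ℝ) with hF₀def
  have hF₀ : ∀ p : Matrix (Fin d) (Fin d) ℝ × ℝ, F₀ p = p.2 * lmax - ℓ (π p.1) := by
    intro p
    simp [hF₀def, mul_comm]
  -- the cone
  set C : ConvexCone ℝ (Matrix (Fin d) (Fin d) ℝ × ℝ) :=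
    { carrier := {p : Matrix (Fin d) (Fin d) ℝ × ℝ | (p.1 + p.1ᵀ).PosSemidef ∧ 0 ≤ p.2}
      smul_mem' := by
        rintro c hc ⟨M, t⟩ ⟨h1, h2⟩
        constructor
        · show (c • M + (c • M)ᵀ).PosSemidef
          rw [transpose_smul, ← smul_add]
          exact psd_smul h1 hc.le
        · exact mul_nonneg hc.le h2
      add_mem' := by
        rintro ⟨M, t⟩ ⟨h1, h2⟩ ⟨M', t'⟩ ⟨h1', h2'⟩
        constructor
        · show ((M + M') + (M + M')ᵀ).PosSemidef
          rw [transpose_add, add_add_add_comm]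
          exact h1.add h1'
        · exact add_nonneg h2 h2' } with hCdef
  have hCmem : ∀ p : Matrix (Fin d) (Fin d) ℝ × ℝ,
      p ∈ C ↔ (p.1 + p.1ᵀ).PosSemidef ∧ 0 ≤ p.2 := fun p => Iff.rfl
  have hpsd_of_sym : ∀ M : Matrix (Fin d) (Fin d) ℝ,
      Mᵀ = M → (M + Mᵀ).PosSemidef → M.PosSemidef := by
    intro M hs h
    have h2 : ((1/2 : ℝ) • (M + Mᵀ)).PosSemidef := psd_smul h (by norm_num)
    rw [hs, ← two_smul ℝ M, smul_smul] at h2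
    norm_num at h2
    exact h2
  -- nonnegativity of F₀ on H ∩ C
  have hnonneg : ∀ p : Matrix (Fin d) (Fin d) ℝ × ℝ, p ∈ H → p ∈ C → 0 ≤ F₀ p := by
    rintro ⟨M, t⟩ hH hC
    rw [hHmem] at hH
    rw [hCmem] at hC
    obtain ⟨hpsd2, ht⟩ := hC
    have hMsym : Mᵀ = M := by
      have h1 : (M - t • M₀)ᵀ = M - t • M₀ := hWsym _ hH
      rw [transpose_sub, transpose_smul, hM₀sym] at h1
      exact sub_left_inj.mp h1
    have hMpsd : M.PosSemidef := hpsd_of_sym M hMsym hpsd2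
    rw [hF₀]
    show 0 ≤ t * lmax - ℓ (π M)
    rcases lt_or_eq_of_le ht with htpos | hteq
    · have hML : t⁻¹ • M ∈ L := by
        rw [hmemL]
        have heq : t⁻¹ • M - M₀ = t⁻¹ • (M - t • M₀) := by
          rw [smul_sub, smul_smul, inv_mul_cancel₀ htpos.ne', one_smul]
        rw [heq]
        exact Submodule.smul_mem _ _ hH
      have hMpsd' : (t⁻¹ • M).PosSemidef := psd_smul hMpsd (by positivity)
      have hb := hPbound _ hMpsd' hML
      rw [_root_.map_smul, _root_.map_smul, smul_eq_mul] at hb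
      have hb2 := mul_le_mul_of_nonneg_left hb htpos.le
      rw [← mul_assoc, mul_inv_cancel₀ htpos.ne', one_mul] at hb2
      linarith
    · have ht0 : t = 0 := hteq.symm
      subst ht0
      have hMW : M ∈ W := by simpa using hH
      by_contra hcon
      push_neg at hcon
      have hpos : 0 < ℓ (π M) := by linarith
      have hM₀P : ℓ (π M₀) ≤ lmax := hPbound M₀ hM₀pd.posSemidef hM₀L
      set s := (lmax - ℓ (π M₀)) / ℓ (π M) + 1 with hs
      have hspos : 0 ≤ s := by
        rw [hs]
        have : 0 ≤ (lmax - ℓ (π M₀)) / ℓ (π M) := div_nonneg (by linarith) hpos.le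
        linarith
      have hQL : M₀ + s • M ∈ L := by
        rw [hmemL]
        simpa [add_sub_cancel_left] using Submodule.smul_mem W s hMW
      have hQpsd : (M₀ + s • M).PosSemidef :=
        hM₀pd.posSemidef.add (psd_smul hMpsd hspos)
      have hb := hPbound _ hQpsd hQL
      rw [_root_.map_add, _root_.map_add, _root_.map_smul, _root_.map_smul, smul_eq_mul] at hb
      have hsval : s * ℓ (π M) = lmax - ℓ (π M₀) + ℓ (π M) := by
        rw [hs]
        field_simp
      rw [hsval] at hb
      linarith
  -- density
  have hdense : ∀ y : Matrix (Fin d) (Fin d) ℝ × ℝ,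
      ∃ x : H, (x : Matrix (Fin d) (Fin d) ℝ × ℝ) + y ∈ C := by
    rintro ⟨N, s⟩
    have hherm : (N + Nᵀ)ᴴ = N + Nᵀ := by
      rw [conjTranspose_eq_transpose_of_trivial, transpose_add, transpose_transpose, add_comm]
    obtain ⟨t₀, ht₀, hpsd⟩ := exists_shift M₀ (N + Nᵀ) hM₀pd hherm (max (-2*s) 0)
    have hxH : ((t₀/2) • M₀, t₀/2) ∈ H := by
      rw [hHmem]
      simp
    refine ⟨⟨((t₀/2) • M₀, t₀/2), hxH⟩, ?_, ?_⟩
    · show (((t₀/2) • M₀ + N) + ((t₀/2) • M₀ + N)ᵀ).PosSemidef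
      have heq : ((t₀/2) • M₀ + N) + ((t₀/2) • M₀ + N)ᵀ = t₀ • M₀ + (N + Nᵀ) := by
        rw [transpose_add, transpose_smul, hM₀sym, add_add_add_comm, ← add_smul]
        norm_num
      rw [heq]
      exact hpsd
    · show 0 ≤ t₀/2 + s
      have h1 : -2*s ≤ t₀ := le_trans (le_max_left _ _) ht₀
      linarith
  -- Riesz extension
  obtain ⟨g, hg_eq, hg_nonneg⟩ := riesz_extension (C.toPointedCone (by
      refine ⟨?_, le_refl 0⟩
      show ((0 : Matrix (Fin d) (Fin d) ℝ) + (0 : Matrix (Fin d) (Fin d) ℝ)ᵀ).PosSemidef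
      simpa using Matrix.PosSemidef.zero)) (F₀.toPMap H)
    (fun x hx => by
      rw [show (F₀.toPMap H) x = F₀ x from LinearMap.toPMap_apply F₀ H x]
      exact hnonneg _ x.2 hx)
    (fun y => hdense y)
  have hgH : ∀ p : Matrix (Fin d) (Fin d) ℝ × ℝ, p ∈ H → g p = F₀ p := by
    intro p hp
    have := hg_eq ⟨p, hp⟩
    rwa [show (F₀.toPMap H) ⟨p, hp⟩ = F₀ p from LinearMap.toPMap_apply F₀ H ⟨p, hp⟩] at this
  -- the matrix B'
  set B' : Matrix (Fin d) (Fin d) ℝ :=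
    Matrix.of (fun i j => g (single i j 1, 0)) with hB'def
  have hgB' : ∀ M : Matrix (Fin d) (Fin d) ℝ,
      g (M, (0:ℝ)) = ∑ i, ∑ j, M i j * B' i j := by
    intro M
    calc g (M, (0:ℝ)) = (g ∘ₗ LinearMap.inl ℝ (Matrix (Fin d) (Fin d) ℝ) ℝ) M := rfl
      _ = (g ∘ₗ LinearMap.inl ℝ (Matrix (Fin d) (Fin d) ℝ) ℝ)
            (∑ i, ∑ j, single i j (M i j)) := by
          rw [← matrix_eq_sum_single M]
      _ = ∑ i, ∑ j, M i j * B' i j := by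
          rw [_root_.map_sum]
          refine Finset.sum_congr rfl fun i _ => ?_
          rw [_root_.map_sum]
          refine Finset.sum_congr rfl fun j _ => ?_
          have : single i j (M i j) = M i j • single i j 1 := by
            rw [smul_single, smul_eq_mul, mul_one]
          rw [this, _root_.map_smul, smul_eq_mul]
          rfl
  have htrace : ∀ M : Matrix (Fin d) (Fin d) ℝ,
      Matrix.trace (Mᵀ * B') = ∑ i, ∑ j, M i j * B' i j := by
    intro M
    calc Matrix.trace (Mᵀ * B') = ∑ j, ∑ i, M i j * B' i j := by
          simp [Matrix.trace, Matrix.diag, Matrix.mul_apply]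
      _ = ∑ i, ∑ j, M i j * B' i j := Finset.sum_comm
  have hquad : ∀ x : Fin d → ℝ, x ⬝ᵥ (B' *ᵥ x) = g (vecMulVec x x, (0:ℝ)) := by
    intro x
    rw [hgB']
    simp only [dotProduct, mulVec, vecMulVec_apply, Finset.mul_sum]
    exact Finset.sum_congr rfl fun i _ => Finset.sum_congr rfl fun j _ => by ring
  have houter : ∀ x : Fin d → ℝ, ((vecMulVec x x : Matrix (Fin d) (Fin d) ℝ), (0:ℝ)) ∈ C := by
    intro x
    have hsym : (vecMulVec x x)ᵀ = vecMulVec x x := by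
      ext i j
      simp [vecMulVec_apply, mul_comm]
    refine ⟨?_, le_refl 0⟩
    show ((vecMulVec x x) + (vecMulVec x x)ᵀ).PosSemidef
    have hpsd : (vecMulVec x x : Matrix (Fin d) (Fin d) ℝ).PosSemidef := by
      refine posSemidef_iff_dotProduct_mulVec.mpr ⟨?_, ?_⟩
      · show (vecMulVec x x)ᴴ = vecMulVec x x
        rw [conjTranspose_eq_transpose_of_trivial, hsym]
      · intro y
        have hst : star y = y := by simp
        rw [hst]
        have heq : y ⬝ᵥ (vecMulVec x x *ᵥ y) = (x ⬝ᵥ y) * (x ⬝ᵥ y) := by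
          simp only [dotProduct, mulVec, vecMulVec_apply, Finset.mul_sum, Finset.sum_mul]
          exact Finset.sum_congr rfl fun i _ => Finset.sum_congr rfl fun j _ => by ring
        rw [heq]
        exact mul_self_nonneg _
    rw [hsym]
    exact hpsd.add hpsd
  -- the matrix B
  set B : Matrix (Fin d) (Fin d) ℝ := (1/2 : ℝ) • (B' + B'ᵀ) with hBdef
  have hBsym : Bᵀ = B := by
    rw [hBdef, transpose_smul, transpose_add, transpose_transpose, add_comm]
  have hTtrick : ∀ y : Fin d → ℝ, y ⬝ᵥ (B'ᵀ *ᵥ y) = y ⬝ᵥ (B' *ᵥ y) := by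
    intro y
    simp only [dotProduct, mulVec, transpose_apply, Finset.mul_sum]
    rw [Finset.sum_comm]
    exact Finset.sum_congr rfl fun i _ => Finset.sum_congr rfl fun j _ => by ring
  have hBquad : ∀ y : Fin d → ℝ, y ⬝ᵥ (B *ᵥ y) = y ⬝ᵥ (B' *ᵥ y) := by
    intro y
    rw [hBdef, smul_mulVec, dotProduct_smul, add_mulVec, dotProduct_add, hTtrick,
      smul_eq_mul]
    ring
  have hBpsd : B.PosSemidef := by
    refine posSemidef_iff_dotProduct_mulVec.mpr ⟨?_, ?_⟩
    · show Bᴴ = B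
      rw [conjTranspose_eq_transpose_of_trivial, hBsym]
    · intro y
      have hst : star y = y := by simp
      rw [hst, hBquad, hquad]
      exact hg_nonneg _ (houter y)
  have htraceB : ∀ M : Matrix (Fin d) (Fin d) ℝ, Mᵀ = M →
      Matrix.trace (Mᵀ * B) = Matrix.trace (Mᵀ * B') := by
    intro M hs
    have hTT : Matrix.trace (Mᵀ * B'ᵀ) = Matrix.trace (Mᵀ * B') := by
      calc Matrix.trace (Mᵀ * B'ᵀ) = Matrix.trace ((B' * M)ᵀ) := by rw [transpose_mul]
        _ = Matrix.trace (B' * M) := trace_transpose _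
        _ = Matrix.trace (M * B') := trace_mul_comm _ _
        _ = Matrix.trace (Mᵀ * B') := by rw [hs]
    rw [hBdef, Matrix.mul_smul, trace_smul, Matrix.mul_add, trace_add, hTT, smul_eq_mul]
    ring
  -- key identity on L
  have hkey : ∀ M : Matrix (Fin d) (Fin d) ℝ, M ∈ L →
      lmax - ℓ (π M) = Matrix.trace (Mᵀ * B') + g (0, 1) := by
    intro M hM
    have h1 : (M, (1:ℝ)) ∈ H := by
      rw [hHmem]
      show M - (1:ℝ) • M₀ ∈ W
      rw [one_smul]
      exact (hmemL M).mp hM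
    have h2 := hgH _ h1
    rw [hF₀] at h2
    simp only [] at h2
    have h3 : g (M, (1:ℝ)) = g (M, (0:ℝ)) + g (0, 1) := by
      rw [← _root_.map_add]
      norm_num
    rw [h3] at h2
    rw [htrace, ← hgB']
    have h5 : g (M, (0:ℝ)) + g (0, 1) = 1 * lmax - ℓ (π M) := h2
    linarith [h5]
  -- g(0,1) ≥ 0 and = 0
  have hβnn : 0 ≤ g (0, 1) := by
    refine hg_nonneg _ ?_
    refine ⟨?_, zero_le_one⟩
    show ((0 : Matrix (Fin d) (Fin d) ℝ) + (0 : Matrix (Fin d) (Fin d) ℝ)ᵀ).PosSemidef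
    simpa using Matrix.PosSemidef.zero
  obtain ⟨xstar, hxP, hxval⟩ := hlmax.1
  rw [hlift] at hxP
  obtain ⟨Mstar, ⟨hMs_psd, hMs_L⟩, hMs_eq⟩ := hxP
  have h0 : lmax - ℓ (π Mstar) = Matrix.trace (Mstarᵀ * B') + g (0, 1) := hkey _ hMs_L
  rw [hMs_eq, hxval, sub_self] at h0
  have htr0 : 0 ≤ Matrix.trace (Mstarᵀ * B') := by
    rw [htrace, ← hgB']
    refine hg_nonneg _ ?_
    refine ⟨?_, le_refl 0⟩
    show (Mstar + Mstarᵀ).PosSemidef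
    rw [hLsym _ hMs_L]
    exact hMs_psd.add hMs_psd
  have hβ0 : g (0, 1) = 0 := by linarith
  -- conclusion
  refine ⟨B, hBpsd, fun x => ?_⟩
  obtain ⟨hxpsd, hxL, hxπ⟩ := hA x
  have hk := hkey _ hxL
  rw [hxπ, hβ0, add_zero] at hk
  rw [htraceB _ (hLsym _ hxL)]
  exact hk

end Main
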